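/- Let G = (V,E) be a finite simple graph admitting a k-completion, suppose G is sunflower-reduced, and suppose every set of pairwise true twins of G has at most k + 1 vertices. Then for every K-join B of G, at most k^3 + 4k^2 + 5k + 1 vertices of B belong to a claw or to an induced 4-cycle of G. -/

import Mathlib

open SimpleGraph Finset

variable {V : Type*}

/-- `f` is an (injective, hence linear) umbrella ordering of the graph `G`. -/
def IsUmbrellaOrdering (G : SimpleGraph V) (f : V → ℕ) : Prop :=
  Function.Injective f ∧
    ∀ u v w : V, f u < f v → f v < f w → G.Adj u w → G.Adj u v ∧ G.Adj v w

/-- A graph is a proper interval graph iff it admits an umbrella ordering. -/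
def IsProperIntervalGraph (G : SimpleGraph V) : Prop :=
  ∃ f : V → ℕ, IsUmbrellaOrdering G f

/-- The graph `G + F` obtained by adding the set `F` of pairs as edges. -/
def addEdges (G : SimpleGraph V) (F : Finset (Sym2 V)) : SimpleGraph V :=
  G ⊔ SimpleGraph.fromEdgeSet ↑F

/-- `F` is a completion of `G`: a set of non-loop non-edges whose addition
makes `G` a proper interval graph. -/
def IsCompletion (G : SimpleGraph V) (F : Finset (Sym2 V)) : Prop :=
  (∀ e ∈ F, ¬ e.IsDiag) ∧ (∀ e ∈ F, e ∉ G.edgeSet) ∧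
    IsProperIntervalGraph (addEdges G F)

/-- `F` is a `k`-completion of `G`. -/
def IsKCompletion (G : SimpleGraph V) (k : ℕ) (F : Finset (Sym2 V)) : Prop :=
  IsCompletion G F ∧ F.card ≤ k

/-- `uv` is an extremal edge of `G` with respect to the ordering `f`. -/
def IsExtremalEdge (G : SimpleGraph V) (f : V → ℕ) (u v : V) : Prop :=
  G.Adj u v ∧ f u < f v ∧
    ∀ u' v' : V, G.Adj u' v' → f u' ≤ f u → f v ≤ f v' → u' = u ∧ v' = v

/-- `c` is the center and `l₁, l₂, l₃` the leaves of an induced claw of `G`. -/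
def IsClaw (G : SimpleGraph V) (c l₁ l₂ l₃ : V) : Prop :=
  G.Adj c l₁ ∧ G.Adj c l₂ ∧ G.Adj c l₃ ∧
    ¬ G.Adj l₁ l₂ ∧ ¬ G.Adj l₁ l₃ ∧ ¬ G.Adj l₂ l₃ ∧ l₁ ≠ l₂ ∧ l₁ ≠ l₃ ∧ l₂ ≠ l₃

/-- `a b c d` is an induced 4-cycle of `G` (in this cyclic order). -/
def IsInducedC4 (G : SimpleGraph V) (a b c d : V) : Prop :=
  G.Adj a b ∧ G.Adj b c ∧ G.Adj c d ∧ G.Adj d a ∧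
    ¬ G.Adj a c ∧ ¬ G.Adj b d ∧ a ≠ c ∧ b ≠ d

/-- `x` belongs to some claw of `G` (as center or leaf). -/
def InClaw (G : SimpleGraph V) (x : V) : Prop :=
  ∃ a b c d, IsClaw G a b c d ∧ (x = a ∨ x = b ∨ x = c ∨ x = d)

/-- `x` belongs to some induced 4-cycle of `G`. -/
def InC4 (G : SimpleGraph V) (x : V) : Prop :=
  ∃ a b c d, IsInducedC4 G a b c d ∧ (x = a ∨ x = b ∨ x = c ∨ x = d)

/-- `{x, y, z}` is an independent set of size 3 (a `3K₁`) of `G`. -/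
def IsInd3 (G : SimpleGraph V) (x y z : V) : Prop :=
  x ≠ y ∧ x ≠ z ∧ y ≠ z ∧ ¬ G.Adj x y ∧ ¬ G.Adj x z ∧ ¬ G.Adj y z

/-- `x` belongs to some independent set of size 3 of `G`. -/
def InInd3 (G : SimpleGraph V) (x : V) : Prop := ∃ y z, IsInd3 G x y z

/-- `G` is sunflower-reduced (for the parameter `k`). -/
def SunflowerReduced (G : SimpleGraph V) (k : ℕ) : Prop :=
  ∀ u v : V, u ≠ v → ¬ G.Adj u v →
    {w : V | ∃ c, IsClaw G c u v w}.ncard ≤ k ∧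
    {e : Sym2 V | ∃ a b, e = s(a, b) ∧ IsInducedC4 G u a v b}.ncard ≤ k

/-- `u` and `v` are true twins of `G`: they have the same closed neighborhood. -/
def TrueTwins (G : SimpleGraph V) (u v : V) : Prop :=
  insert u (G.neighborSet u) = insert v (G.neighborSet v)

/-- `b : Fin p → V` enumerates a `K`-join of `G` whose complement is
partitioned into `N`, `L`, `R`, `C`. -/
structure KJoinWith (G : SimpleGraph V) {p : ℕ} (b : Fin p → V)
    (N L R C : Set V) : Prop where
  inj : Function.Injective b
  clique : ∀ i j : Fin p, i ≠ j → G.Adj (b i) (b j)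
  cover : ∀ v : V, v ∉ Set.range b → v ∈ N ∪ L ∪ R ∪ C
  disj : List.Pairwise Disjoint [Set.range b, N, L, R, C]
  nAdj : ∀ v ∈ N, ∀ i, G.Adj v (b i)
  cNotAdj : ∀ v ∈ C, ∀ i, ¬ G.Adj v (b i)
  lrAdj : ∀ v ∈ L ∪ R, ∃ i, G.Adj v (b i)
  lrNotAll : ∀ v ∈ L ∪ R, ∃ i, ¬ G.Adj v (b i)
  rFirst : ∀ r ∈ R, ∀ i : Fin p, i.val = 0 → ¬ G.Adj r (b i)
  lLast : ∀ x ∈ L, ∀ i : Fin p, i.val = p - 1 → ¬ G.Adj x (b i)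
  rMono : ∀ i j : Fin p, i.val + 1 = j.val → ∀ r ∈ R, G.Adj (b i) r → G.Adj (b j) r
  lMono : ∀ i j : Fin p, i.val + 1 = j.val → ∀ x ∈ L, G.Adj (b j) x → G.Adj (b i) x

/-- `B ⊆ V` is a `K`-join of `G`. -/
def IsKJoin (G : SimpleGraph V) (B : Set V) : Prop :=
  ∃ (p : ℕ) (b : Fin p → V) (N L R C : Set V),
    Set.range b = B ∧ KJoinWith G b N L R C

/-- `B` is a clean `K`-join: none of its vertices belongs to a claw or an
induced 4-cycle of `G`. -/
def IsCleanKJoin (G : SimpleGraph V) (B : Set V) : Prop :=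
  IsKJoin G B ∧ ∀ x ∈ B, ¬ InClaw G x ∧ ¬ InC4 G x

/-- `B ⊆ V` is a simple `K`-join of `G` (one of `L`, `R` is empty). -/
def IsSimpleKJoin (G : SimpleGraph V) (B : Set V) : Prop :=
  ∃ (p : ℕ) (b : Fin p → V) (N L R C : Set V),
    Set.range b = B ∧ KJoinWith G b N L R C ∧ (L = ∅ ∨ R = ∅)

/-- `B` is bcc-clean: none of its vertices belongs to a `3K₁` or an induced
4-cycle of `G`. -/
def IsBccClean (G : SimpleGraph V) (B : Set V) : Prop :=
  ∀ x ∈ B, ¬ InInd3 G x ∧ ¬ InC4 G x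

/-- `b : Fin p → V` enumerates (in umbrella order) a 1-branch of `G` with
complement partitioned into `R`, `C`; `b l` is the neighbor of the last
vertex `b (p-1)` of minimal index.  The attachment clique is
`B₁ = {b i : l ≤ i}` and `B^R = {b i : i < l}`. -/
structure OneBranch (G : SimpleGraph V) {p : ℕ} (b : Fin p → V)
    (R C : Set V) (l : Fin p) : Prop where
  pos : 0 < p
  inj : Function.Injective b
  umbrella : ∀ i j m : Fin p, i < j → j < m → G.Adj (b i) (b m) →
    G.Adj (b i) (b j) ∧ G.Adj (b j) (b m)
  connB : (G.induce (Set.range b)).Connected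
  cover : ∀ v : V, v ∉ Set.range b → v ∈ R ∪ C
  disj : List.Pairwise Disjoint [Set.range b, R, C]
  noBC : ∀ v ∈ C, ∀ i, ¬ G.Adj v (b i)
  rNbr : ∀ v ∈ R, ∃ i, G.Adj v (b i)
  lMin : ∀ j : Fin p, j < l → ¬ G.Adj (b j) (b ⟨p - 1, Nat.sub_lt pos Nat.one_pos⟩)
  lNbr : l.val = p - 1 ∨ G.Adj (b l) (b ⟨p - 1, Nat.sub_lt pos Nat.one_pos⟩)
  noEarlyR : ∀ j : Fin p, j < l → ∀ r ∈ R, ¬ G.Adj r (b j)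
  rMono : ∀ i j : Fin p, l ≤ i → i.val + 1 = j.val → ∀ r ∈ R,
    G.Adj (b i) r → G.Adj (b j) r

/-- `b : Fin p → V` enumerates (in umbrella order) a 2-branch of `G` with
complement partitioned into `L`, `R`, `C`; `b l` is the neighbor of `b (p-1)`
of minimal index and `b l'` is the neighbor of `b 0` of maximal index.  The
attachment cliques are `B₁ = {b i : i ≤ l'}` and `B₂ = {b i : l ≤ i}`, and
`B^R = {b i : l' < i < l}`. -/
structure TwoBranch (G : SimpleGraph V) {p : ℕ} (b : Fin p → V)
    (L R C : Set V) (l l' : Fin p) : Prop where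
  pos : 0 < p
  inj : Function.Injective b
  umbrella : ∀ i j m : Fin p, i < j → j < m → G.Adj (b i) (b m) →
    G.Adj (b i) (b j) ∧ G.Adj (b j) (b m)
  connB : (G.induce (Set.range b)).Connected
  cover : ∀ v : V, v ∉ Set.range b → v ∈ L ∪ R ∪ C
  disj : List.Pairwise Disjoint [Set.range b, L, R, C]
  noBC : ∀ v ∈ C, ∀ i, ¬ G.Adj v (b i)
  lNbrEx : ∀ v ∈ L, ∃ i, G.Adj v (b i)
  rNbrEx : ∀ v ∈ R, ∃ i, G.Adj v (b i)
  lMin : ∀ j : Fin p, j < l → ¬ G.Adj (b j) (b ⟨p - 1, Nat.sub_lt pos Nat.one_pos⟩)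
  lNbr : l.val = p - 1 ∨ G.Adj (b l) (b ⟨p - 1, Nat.sub_lt pos Nat.one_pos⟩)
  lMax' : ∀ j : Fin p, l' < j → ¬ G.Adj (b ⟨0, pos⟩) (b j)
  lNbr' : l'.val = 0 ∨ G.Adj (b ⟨0, pos⟩) (b l')
  noEarlyR : ∀ j : Fin p, j < l → ∀ r ∈ R, ¬ G.Adj r (b j)
  noLateL : ∀ j : Fin p, l' < j → ∀ v ∈ L, ¬ G.Adj v (b j)
  rMono : ∀ i j : Fin p, l ≤ i → i.val + 1 = j.val → ∀ r ∈ R,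
    G.Adj (b i) r → G.Adj (b j) r
  lMono : ∀ i j : Fin p, j ≤ l' → i.val + 1 = j.val → ∀ v ∈ L,
    G.Adj (b j) v → G.Adj (b i) v

/-- `e : Fin q → Fin p` lists the last indices of the `q` K-joins of the
K-join decomposition of the 2-branch enumerated by `b` (with attachment
cliques ending at `l'` resp. starting at `l`). -/
def KJoinDecomp (G : SimpleGraph V) {p : ℕ} (b : Fin p → V) (l l' : Fin p)
    (q : ℕ) (e : Fin q → Fin p) : Prop :=
  0 < q ∧
  (∀ i : Fin q, i.val = 0 → e i = l') ∧
  (∀ i : Fin q, i.val = q - 1 → (e i).val = p - 1) ∧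
  StrictMono e ∧
  ∀ i j : Fin q, i.val + 1 = j.val →
    ∃ hs : (e i).val + 1 < p,
      (j.val + 1 < q →
        (⟨(e i).val + 1, hs⟩ : Fin p) < l ∧
        G.Adj (b ⟨(e i).val + 1, hs⟩) (b (e j)) ∧
        ∀ m : Fin p, G.Adj (b ⟨(e i).val + 1, hs⟩) (b m) → m ≤ e j) ∧
      (j.val + 1 = q → l ≤ (⟨(e i).val + 1, hs⟩ : Fin p))

/-- `G` is a bi-clique chain graph: two cliques joined by a join. -/
def IsBicliqueChain (G : SimpleGraph V) : Prop :=
  ∃ (q : ℕ) (x : Fin q → V) (Y : Set V),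
    Function.Injective x ∧
    Disjoint (Set.range x) Y ∧
    (∀ v : V, v ∈ Set.range x ∨ v ∈ Y) ∧
    (∀ i j : Fin q, i ≠ j → G.Adj (x i) (x j)) ∧
    G.IsClique Y ∧
    (∀ i j : Fin q, i ≤ j → ∀ y ∈ Y, G.Adj (x i) y → G.Adj (x j) y)

/-- `F` is a bcc-`k`-completion of `G`. -/
def IsBccKCompletion (G : SimpleGraph V) (k : ℕ) (F : Finset (Sym2 V)) : Prop :=
  (∀ e ∈ F, ¬ e.IsDiag) ∧ (∀ e ∈ F, e ∉ G.edgeSet) ∧ F.card ≤ k ∧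
    IsBicliqueChain (addEdges G F)

section AuxLemmas

variable {G : SimpleGraph V}

lemma clawPerm12 {c a b d : V} (h : IsClaw G c a b d) : IsClaw G c b a d := by
  obtain ⟨h1, h2, h3, h4, h5, h6, h7, h8, h9⟩ := h
  exact ⟨h2, h1, h3, fun hh => h4 hh.symm, h6, h5, h7.symm, h9, h8⟩

lemma clawPerm23 {c a b d : V} (h : IsClaw G c a b d) : IsClaw G c a d b := by
  obtain ⟨h1, h2, h3, h4, h5, h6, h7, h8, h9⟩ := h
  exact ⟨h1, h3, h2, h5, h4, fun hh => h6 hh.symm, h8, h7, h9.symm⟩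

lemma c4Rot {a b c d : V} (h : IsInducedC4 G a b c d) : IsInducedC4 G b c d a := by
  obtain ⟨h1, h2, h3, h4, h5, h6, h7, h8⟩ := h
  exact ⟨h2, h3, h4, h1, h6, fun hh => h5 hh.symm, h8, h7.symm⟩

lemma c4Refl {a b c d : V} (h : IsInducedC4 G a b c d) : IsInducedC4 G a d c b := by
  obtain ⟨h1, h2, h3, h4, h5, h6, h7, h8⟩ := h
  exact ⟨h4.symm, h3.symm, h2.symm, h1.symm, h5, fun hh => h6 hh.symm, h7, h8.symm⟩

lemma c4Swap13 {a b c d : V} (h : IsInducedC4 G a b c d) : IsInducedC4 G c b a d :=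
  c4Refl (c4Rot (c4Rot h))

/-- A graph with an umbrella ordering has no claw. -/
lemma umbrella_no_claw {f : V → ℕ} (hf : IsUmbrellaOrdering G f)
    {c a b d : V} (h : IsClaw G c a b d) : False := by
  obtain ⟨hinj, hu⟩ := hf
  -- key: sorted triple of leaves
  have key : ∀ x y z : V, G.Adj c x → G.Adj c y → G.Adj c z →
      ¬ G.Adj x y → ¬ G.Adj y z → f x < f y → f y < f z → False := by
    intro x y z hcx hcy hcz hxy hyz h1 h2
    rcases lt_trichotomy (f c) (f y) with hc | hc | hc
    · exact hyz (hu c y z hc h2 hcz).2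
    · exact G.irrefl (hinj hc ▸ hcy)
    · exact hxy (hu x y c h1 hc hcx.symm).1
  obtain ⟨h1, h2, h3, h4, h5, h6, h7, h8, h9⟩ := h
  have f12 : f a ≠ f b := fun hh => h7 (hinj hh)
  have f13 : f a ≠ f d := fun hh => h8 (hinj hh)
  have f23 : f b ≠ f d := fun hh => h9 (hinj hh)
  rcases lt_or_gt_of_ne f12 with hab | hab
  · rcases lt_or_gt_of_ne f23 with hbd | hbd
    · exact key a b d h1 h2 h3 h4 h6 hab hbd
    · rcases lt_or_gt_of_ne f13 with had | had
      · exact key a d b h1 h3 h2 h5 (fun hh => h6 hh.symm) had hbd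
      · exact key d a b h3 h1 h2 (fun hh => h5 hh.symm) h4 had hab
  · rcases lt_or_gt_of_ne f13 with had | had
    · exact key b a d h2 h1 h3 (fun hh => h4 hh.symm) h5 hab had
    · rcases lt_or_gt_of_ne f23 with hbd | hbd
      · exact key b d a h2 h3 h1 h6 (fun hh => h5 hh.symm) hbd had
      · exact key d b a h3 h2 h1 (fun hh => h6 hh.symm) (fun hh => h4 hh.symm) hbd hab

/-- A graph with an umbrella ordering has no induced 4-cycle. -/
lemma umbrella_no_c4 {f : V → ℕ} (hf : IsUmbrellaOrdering G f)
    {a b c d : V} (h : IsInducedC4 G a b c d) : False := by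
  obtain ⟨hinj, hu⟩ := hf
  have key : ∀ a b c d : V, IsInducedC4 G a b c d → f a < f c → f b < f d → False := by
    intro a b c d h hac hbd
    obtain ⟨h1, h2, h3, h4, h5, h6, h7, h8⟩ := h
    rcases lt_trichotomy (f a) (f b) with hab | hab | hab
    · exact h6 (hu a b d hab hbd h4.symm).2
    · exact G.irrefl (hinj hab ▸ h1)
    · exact h5 (hu b a c hab hac h2).2
  have f13 : f a ≠ f c := fun hh => h.2.2.2.2.2.2.1 (hinj hh)
  have f24 : f b ≠ f d := fun hh => h.2.2.2.2.2.2.2 (hinj hh)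
  rcases lt_or_gt_of_ne f13 with hac | hac
  · rcases lt_or_gt_of_ne f24 with hbd | hbd
    · exact key a b c d h hac hbd
    · exact key a d c b (c4Refl h) hac hbd
  · rcases lt_or_gt_of_ne f24 with hbd | hbd
    · exact key c b a d (c4Swap13 h) hac hbd
    · exact key c d a b (c4Rot (c4Rot h)) hac hbd

lemma addEdges_adj {F : Finset (Sym2 V)} {x y : V} :
    (addEdges G F).Adj x y ↔ G.Adj x y ∨ (s(x, y) ∈ F ∧ x ≠ y) := by
  simp [addEdges, SimpleGraph.fromEdgeSet_adj]

/-- Every claw of `G` has a leaf pair in the completion `F`. -/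
lemma claw_hit {F : Finset (Sym2 V)} (hcomp : IsCompletion G F)
    {c a b d : V} (h : IsClaw G c a b d) :
    s(a, b) ∈ F ∨ s(a, d) ∈ F ∨ s(b, d) ∈ F := by
  by_contra hn
  push_neg at hn
  obtain ⟨hn1, hn2, hn3⟩ := hn
  obtain ⟨f, hf⟩ := hcomp.2.2
  obtain ⟨h1, h2, h3, h4, h5, h6, h7, h8, h9⟩ := h
  refine umbrella_no_claw hf (c := c) (a := a) (b := b) (d := d)
    ⟨addEdges_adj.2 (Or.inl h1), addEdges_adj.2 (Or.inl h2), addEdges_adj.2 (Or.inl h3),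
      ?_, ?_, ?_, h7, h8, h9⟩ <;>
  · rintro hh
    rcases addEdges_adj.1 hh with hg | ⟨hm, _⟩
    · first
        | exact h4 hg
        | exact h5 hg
        | exact h6 hg
    · first
        | exact hn1 hm
        | exact hn2 hm
        | exact hn3 hm

/-- Every induced 4-cycle of `G` has a diagonal in the completion `F`. -/
lemma c4_hit {F : Finset (Sym2 V)} (hcomp : IsCompletion G F)
    {a b c d : V} (h : IsInducedC4 G a b c d) :
    s(a, c) ∈ F ∨ s(b, d) ∈ F := by
  by_contra hn
  push_neg at hn
  obtain ⟨hn1, hn2⟩ := hn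
  obtain ⟨f, hf⟩ := hcomp.2.2
  obtain ⟨h1, h2, h3, h4, h5, h6, h7, h8⟩ := h
  refine umbrella_no_c4 hf (a := a) (b := b) (c := c) (d := d)
    ⟨addEdges_adj.2 (Or.inl h1), addEdges_adj.2 (Or.inl h2), addEdges_adj.2 (Or.inl h3),
      addEdges_adj.2 (Or.inl h4), ?_, ?_, h7, h8⟩ <;>
  · rintro hh
    rcases addEdges_adj.1 hh with hg | ⟨hm, _⟩
    · first
        | exact h5 hg
        | exact h6 hg
    · first
        | exact hn1 hm
        | exact hn2 hm

/-- Propagate a step-monotone property upwards along `Fin p`. -/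
lemma finStep_up {p : ℕ} {P : Fin p → Prop}
    (h : ∀ i j : Fin p, i.val + 1 = j.val → P i → P j) :
    ∀ i j : Fin p, i ≤ j → P i → P j := by
  intro i j hij hi
  suffices H : ∀ n (hn : n < p), i.val ≤ n → P ⟨n, hn⟩ by
    have := H j.val j.isLt hij
    simpa using this
  intro n
  induction n with
  | zero =>
      intro hn h0
      have : i = ⟨0, hn⟩ := Fin.ext (Nat.le_zero.mp h0)
      exact this ▸ hi
  | succ m ihm =>
      intro hn hle
      rcases Nat.lt_or_ge i.val (m + 1) with hlt | hge
      · have hm : m < p := Nat.lt_of_succ_lt hn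
        exact h ⟨m, hm⟩ ⟨m + 1, hn⟩ rfl (ihm hm (Nat.lt_succ_iff.mp hlt))
      · have : i = ⟨m + 1, hn⟩ := Fin.ext (le_antisymm hle hge)
        exact this ▸ hi

lemma finStep_down {p : ℕ} {P : Fin p → Prop}
    (h : ∀ i j : Fin p, i.val + 1 = j.val → P j → P i) :
    ∀ i j : Fin p, i ≤ j → P j → P i := by
  intro i j hij hj
  by_contra hi
  exact (finStep_up (P := fun m => ¬ P m)
    (fun i j hij hpi hpj => hpi (h i j hij hpj)) i j hij hi) hj

lemma ncard_biUnion_le {α ι : Type*} [Finite α] (s : Finset ι) (f : ι → Set α) :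
    (⋃ i ∈ s, f i).ncard ≤ ∑ i ∈ s, (f i).ncard := by
  classical
  induction s using Finset.induction with
  | empty => simp
  | insert _ _ hnot ih =>
      rename_i a s
      rw [Finset.sum_insert hnot, Finset.set_biUnion_insert]
      exact le_trans (Set.ncard_union_le _ _) (Nat.add_le_add_left ih _)

lemma twin_ext {x y : V} (hnt : ¬ TrueTwins G x y) (hadj : G.Adj x y) :
    ∃ z, z ≠ y ∧ z ≠ x ∧
      ((G.Adj z x ∧ ¬ G.Adj z y) ∨ (G.Adj z y ∧ ¬ G.Adj z x)) := by
  have hex : ∃ z, (z ∈ insert x (G.neighborSet x) ∧ z ∉ insert y (G.neighborSet y)) ∨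
      (z ∈ insert y (G.neighborSet y) ∧ z ∉ insert x (G.neighborSet x)) := by
    by_contra hcon
    push_neg at hcon
    refine hnt (Set.Subset.antisymm ?_ ?_)
    · intro z hz
      by_contra hz2
      exact hz2 ((hcon z).1 hz)
    · intro z hz
      by_contra hz2
      exact hz2 ((hcon z).2 hz)
  obtain ⟨z, hz | hz⟩ := hex
  · obtain ⟨hz1, hz2⟩ := hz
    simp only [Set.mem_insert_iff, SimpleGraph.mem_neighborSet, not_or] at hz1 hz2
    rcases hz1 with rfl | hz1
    · exact absurd hadj.symm (by simpa using hz2.2)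
    · exact ⟨z, hz2.1, (G.ne_of_adj hz1).symm,
        Or.inl ⟨hz1.symm, fun hh => hz2.2 hh.symm⟩⟩
  · obtain ⟨hz1, hz2⟩ := hz
    simp only [Set.mem_insert_iff, SimpleGraph.mem_neighborSet, not_or] at hz1 hz2
    rcases hz1 with rfl | hz1
    · exact absurd hadj (by simpa using hz2.2)
    · exact ⟨z, (G.ne_of_adj hz1).symm, hz2.1,
        Or.inr ⟨hz1.symm, fun hh => hz2.2 hh.symm⟩⟩

end AuxLemmas
section Main

variable {G : SimpleGraph V}

theorem kjoin_main_count [Fintype V] (G : SimpleGraph V) (k : ℕ) (F : Finset (Sym2 V))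
    (hcomp : IsCompletion G F) (hFcard : F.card ≤ k)
    (hred : SunflowerReduced G k)
    (htwins : ∀ T : Set V, (∀ u ∈ T, ∀ v ∈ T, TrueTwins G u v) → T.ncard ≤ k + 1)
    {p : ℕ} (b : Fin p → V) (N L R C : Set V) (hK : KJoinWith G b N L R C) :
    {x ∈ Set.range b | InClaw G x ∨ InC4 G x}.ncard ≤ k ^ 3 + 4 * k ^ 2 + 5 * k + 1 := by
  classical
  -- basic facts about F
  have hFne : ∀ u v : V, s(u, v) ∈ F → u ≠ v ∧ ¬ G.Adj u v := by
    intro u v hm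
    constructor
    · intro h; exact hcomp.1 _ hm (Sym2.mk_isDiag_iff.2 h)
    · intro h; exact hcomp.2.1 _ hm ((G.mem_edgeSet).2 h)
  set A : Set V := {x | ∃ e ∈ F, x ∈ e} with hAdef
  set WW : Set V := {x | ∃ u v : V, s(u, v) ∈ F ∧ ∃ c, IsClaw G c u v x} with hWdef
  set M : Set V := A ∪ WW with hMdef
  have hmemA : ∀ u v : V, s(u, v) ∈ F → u ∈ A ∧ v ∈ A := by
    intro u v hm
    exact ⟨⟨s(u, v), hm, by simp⟩, ⟨s(u, v), hm, by simp⟩⟩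
  -- |A| ≤ 2k
  have hA : A.ncard ≤ 2 * k := by
    have hsub : A ⊆ ⋃ e ∈ F, {x : V | x ∈ e} := by
      rintro x ⟨e, he, hx⟩
      exact Set.mem_biUnion he hx
    have hper : ∀ e ∈ F, ({x : V | x ∈ e} : Set V).ncard ≤ 2 := by
      intro e _
      induction e using Sym2.ind with
      | _ u v =>
        have : ({x : V | x ∈ (s(u, v) : Sym2 V)} : Set V) = {u, v} := by
          ext x; simp [Sym2.mem_iff]
        rw [this]
        exact le_trans (Set.ncard_insert_le u {v}) (by simp)
    calc A.ncard ≤ (⋃ e ∈ F, {x : V | x ∈ e}).ncard :=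
          Set.ncard_le_ncard hsub (Set.toFinite _)
      _ ≤ ∑ e ∈ F, ({x : V | x ∈ e} : Set V).ncard := ncard_biUnion_le _ _
      _ ≤ ∑ _e ∈ F, 2 := Finset.sum_le_sum hper
      _ = F.card * 2 := by rw [Finset.sum_const, smul_eq_mul]
      _ ≤ 2 * k := by omega
  -- |WW| ≤ k²
  have hW : WW.ncard ≤ k * k := by
    have hsub : WW ⊆ ⋃ e ∈ F,
        {x : V | ∃ u v : V, e = s(u, v) ∧ ∃ c, IsClaw G c u v x} := by
      rintro x ⟨u, v, hm, hc⟩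
      exact Set.mem_biUnion hm ⟨u, v, rfl, hc⟩
    have hper : ∀ e ∈ F,
        ({x : V | ∃ u v : V, e = s(u, v) ∧ ∃ c, IsClaw G c u v x} : Set V).ncard ≤ k := by
      intro e
      induction e using Sym2.ind with
      | _ u v =>
        intro he
        obtain ⟨hne, hnadj⟩ := hFne u v he
        have hsub2 : ({x : V | ∃ u' v' : V, s(u, v) = s(u', v') ∧ ∃ c, IsClaw G c u' v' x} : Set V)
            ⊆ {w : V | ∃ c, IsClaw G c u v w} := by
          rintro x ⟨u', v', heq, c, hcl⟩
          rcases Sym2.eq_iff.1 heq with ⟨rfl, rfl⟩ | ⟨rfl, rfl⟩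
          · exact ⟨c, hcl⟩
          · exact ⟨c, clawPerm12 hcl⟩
        exact le_trans (Set.ncard_le_ncard hsub2 (Set.toFinite _)) (hred u v hne hnadj).1
    calc WW.ncard ≤ _ := Set.ncard_le_ncard hsub (Set.toFinite _)
      _ ≤ ∑ e ∈ F, ({x : V | ∃ u v : V, e = s(u, v) ∧ ∃ c, IsClaw G c u v x} : Set V).ncard :=
          ncard_biUnion_le _ _
      _ ≤ ∑ _e ∈ F, k := Finset.sum_le_sum hper
      _ = F.card * k := by rw [Finset.sum_const, smul_eq_mul]
      _ ≤ k * k := Nat.mul_le_mul_right k hFcard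
  have hM : M.ncard ≤ 2 * k + k * k :=
    le_trans (Set.ncard_union_le _ _) (Nat.add_le_add hA hW)
  -- every leaf of every claw is in M
  have leafM : ∀ c l1 l2 l3 : V, IsClaw G c l1 l2 l3 → l1 ∈ M ∧ l2 ∈ M ∧ l3 ∈ M := by
    intro c l1 l2 l3 h
    rcases claw_hit hcomp h with h12 | h13 | h23
    · exact ⟨Or.inl (hmemA _ _ h12).1, Or.inl (hmemA _ _ h12).2,
        Or.inr ⟨l1, l2, h12, c, h⟩⟩
    · exact ⟨Or.inl (hmemA _ _ h13).1, Or.inr ⟨l1, l3, h13, c, clawPerm23 h⟩,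
        Or.inl (hmemA _ _ h13).2⟩
    · exact ⟨Or.inr ⟨l2, l3, h23, c, clawPerm23 (clawPerm12 h)⟩,
        Or.inl (hmemA _ _ h23).1, Or.inl (hmemA _ _ h23).2⟩
  -- clique
  have hclq : ∀ x y : V, x ∈ Set.range b → y ∈ Set.range b → x ≠ y → G.Adj x y := by
    rintro x y ⟨i, rfl⟩ ⟨j, rfl⟩ hne
    exact hK.clique i j (fun h => hne (by rw [h]))
  -- disjointness facts
  have hdis := hK.disj
  simp only [List.pairwise_cons, List.mem_cons, List.not_mem_nil, or_false,
    List.mem_singleton, forall_eq_or_imp, forall_eq] at hdis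
  have hdisbL : Disjoint (Set.range b) L := hdis.1.2.1
  have hdisbR : Disjoint (Set.range b) R := hdis.1.2.2.1
  have hdisLR : Disjoint L R := hdis.2.2.1.1
  -- vertices of range b in a C4 but not in A: at most k²
  set X2 : Set V := {x | x ∈ Set.range b ∧ x ∉ A ∧ InC4 G x} with hX2def
  have hX2 : X2.ncard ≤ k * k := by
    set Ye : Sym2 V → Set V :=
      fun e => {x | x ∈ Set.range b ∧ ∃ u v t : V, e = s(u, v) ∧ IsInducedC4 G u x v t}
      with hYedef
    have hsub : X2 ⊆ ⋃ e ∈ F, Ye e := by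
      rintro x ⟨hxb, hxA, a1, a2, a3, a4, h4, hpos⟩
      have hnorm : ∃ y w t : V, IsInducedC4 G y x w t := by
        rcases hpos with rfl | rfl | rfl | rfl
        · exact ⟨a4, a2, a3, c4Rot (c4Rot (c4Rot h4))⟩
        · exact ⟨a1, a3, a4, h4⟩
        · exact ⟨a2, a4, a1, c4Rot h4⟩
        · exact ⟨a3, a1, a2, c4Rot (c4Rot h4)⟩
      obtain ⟨y, w, t, hc4⟩ := hnorm
      rcases c4_hit hcomp hc4 with hyw | hxt
      · exact Set.mem_biUnion hyw ⟨hxb, y, w, t, rfl, hc4⟩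
      · exact absurd (hmemA _ _ hxt).1 hxA
    have hper : ∀ e ∈ F, (Ye e).ncard ≤ k := by
      intro e
      induction e using Sym2.ind with
      | _ u v =>
        intro he
        obtain ⟨hne, hnadj⟩ := hFne u v he
        set E4 : Set (Sym2 V) :=
          {e' : Sym2 V | ∃ a' b', e' = s(a', b') ∧ IsInducedC4 G u a' v b'} with hE4def
        have hE4 : E4.ncard ≤ k := (hred u v hne hnadj).2
        have hnorm : ∀ x ∈ Ye s(u, v), ∃ t, IsInducedC4 G u x v t := by
          rintro x ⟨hxb, u', v', t, heq, h4⟩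
          rcases Sym2.eq_iff.1 heq with ⟨rfl, rfl⟩ | ⟨rfl, rfl⟩
          · exact ⟨t, h4⟩
          · exact ⟨t, c4Swap13 h4⟩
        set fmap : V → Sym2 V :=
          fun x => if hx : ∃ t, IsInducedC4 G u x v t then s(x, hx.choose) else s(x, x)
          with hfdef
        refine le_trans
          (Set.ncard_le_ncard_of_injOn fmap ?_ ?_ (Set.toFinite _)) hE4
        · intro x hx
          have hex := hnorm x hx
          simp only [hfdef, dif_pos hex]
          exact ⟨x, hex.choose, rfl, hex.choose_spec⟩
        · intro x hx y hy heq
          have hex := hnorm x hx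
          have hey := hnorm y hy
          simp only [hfdef, dif_pos hex, dif_pos hey] at heq
          rcases Sym2.eq_iff.1 heq with ⟨h1, _⟩ | ⟨h1, h2⟩
          · exact h1
          · -- x = hey.choose, so x is the opposite vertex of y in a C4
            exfalso
            have hspec := hey.choose_spec
            have hneq : y ≠ hey.choose := hspec.2.2.2.2.2.2.2
            have hnadj2 : ¬ G.Adj y hey.choose := hspec.2.2.2.2.2.1
            rw [← h1] at hneq hnadj2
            exact hnadj2 (hclq y x hy.1 hx.1 hneq)
    calc X2.ncard ≤ (⋃ e ∈ F, Ye e).ncard := Set.ncard_le_ncard hsub (Set.toFinite _)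
      _ ≤ ∑ e ∈ F, (Ye e).ncard := ncard_biUnion_le _ _
      _ ≤ ∑ _e ∈ F, k := Finset.sum_le_sum hper
      _ = F.card * k := by rw [Finset.sum_const, smul_eq_mul]
      _ ≤ k * k := Nat.mul_le_mul_right k hFcard
  -- the remaining dirty vertices
  set S : Set V := {x | x ∈ Set.range b ∧ x ∉ M ∧ ¬ InC4 G x ∧ InClaw G x} with hSdef
  have hcenter : ∀ x ∈ S, ∃ l1 l2 l3, IsClaw G x l1 l2 l3 := by
    rintro x ⟨hxb, hxM, hxc4, c, l1, l2, l3, hcl, hpos⟩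
    rcases hpos with rfl | rfl | rfl | rfl
    · exact ⟨l1, l2, l3, hcl⟩
    · exact absurd (leafM _ _ _ _ hcl).1 hxM
    · exact absurd (leafM _ _ _ _ hcl).2.1 hxM
    · exact absurd (leafM _ _ _ _ hcl).2.2 hxM
  -- the core separator construction
  have hcore : ∀ x y z : V, G.Adj z x → ¬ G.Adj z y → z ≠ y → ¬ InC4 G y →
      (∃ v1 v2 v3, IsClaw G y v1 v2 v3) →
      ∃ t, t ∈ M ∧ ((G.Adj t x ∧ ¬ G.Adj t y) ∨ (G.Adj t y ∧ ¬ G.Adj t x)) := by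
    intro x y z hzx hzy hzy' hyc4 ⟨v1, v2, v3, hcl⟩
    by_cases hzM : z ∈ M
    · exact ⟨z, hzM, Or.inl ⟨hzx, hzy⟩⟩
    obtain ⟨hy1, hy2, hy3, n12, n13, n23, d12, d13, d23⟩ := hcl
    have hMv := leafM _ _ _ _ ⟨hy1, hy2, hy3, n12, n13, n23, d12, d13, d23⟩
    have hC4mk : ∀ s t : V, G.Adj y s → G.Adj y t → ¬ G.Adj s t → s ≠ t →
        G.Adj z s → G.Adj z t → False := by
      intro s t hys hyt hst hne hzs hzt
      exact hyc4 ⟨s, z, t, y, ⟨hzs.symm, hzt, hyt.symm, hys, hst, hzy, hne, hzy'⟩,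
        Or.inr (Or.inr (Or.inr rfl))⟩
    have hfinish : ∀ s' t' : V, G.Adj y s' → G.Adj y t' → ¬ G.Adj s' t' → s' ≠ t' →
        s' ∈ M → t' ∈ M → ¬ G.Adj z s' → ¬ G.Adj z t' →
        ∃ t, t ∈ M ∧ ((G.Adj t x ∧ ¬ G.Adj t y) ∨ (G.Adj t y ∧ ¬ G.Adj t x)) := by
      intro s' t' hys hyt hst hne hsM htM hzs hzt
      by_cases hxs : G.Adj x s'
      · by_cases hxt : G.Adj x t'
        · have hclaw2 : IsClaw G x z s' t' :=
            ⟨hzx.symm, hxs, hxt, hzs, hzt, hst,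
              fun h => hzM (h ▸ hsM), fun h => hzM (h ▸ htM), hne⟩
          exact absurd (leafM _ _ _ _ hclaw2).1 hzM
        · exact ⟨t', htM, Or.inr ⟨hyt.symm, fun h => hxt h.symm⟩⟩
      · exact ⟨s', hsM, Or.inr ⟨hys.symm, fun h => hxs h.symm⟩⟩
    by_cases hz1 : G.Adj z v1
    · by_cases hz2 : G.Adj z v2
      · exact (hC4mk v1 v2 hy1 hy2 n12 d12 hz1 hz2).elim
      by_cases hz3 : G.Adj z v3
      · exact (hC4mk v1 v3 hy1 hy3 n13 d13 hz1 hz3).elim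
      · exact hfinish v2 v3 hy2 hy3 n23 d23 hMv.2.1 hMv.2.2 hz2 hz3
    · by_cases hz2 : G.Adj z v2
      · by_cases hz3 : G.Adj z v3
        · exact (hC4mk v2 v3 hy2 hy3 n23 d23 hz2 hz3).elim
        · exact hfinish v1 v3 hy1 hy3 n13 d13 hMv.1 hMv.2.2 hz1 hz3
      · exact hfinish v1 v2 hy1 hy2 n12 d12 hMv.1 hMv.2.1 hz1 hz2
  -- full separator lemma, with location
  have hsep : ∀ i j : Fin p, b i ∈ S → b j ∈ S → ¬ TrueTwins G (b i) (b j) →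
      ∃ t, t ∈ M ∧ (t ∈ L ∨ t ∈ R) ∧
        ((G.Adj t (b i) ∧ ¬ G.Adj t (b j)) ∨ (G.Adj t (b j) ∧ ¬ G.Adj t (b i))) := by
    intro i j hiS hjS hnt
    have hij : i ≠ j := by rintro rfl; exact hnt rfl
    have hadj : G.Adj (b i) (b j) := hK.clique i j hij
    obtain ⟨z, hzj, hzi, hcase⟩ := twin_ext hnt hadj
    have hstep : ∃ t, t ∈ M ∧
        ((G.Adj t (b i) ∧ ¬ G.Adj t (b j)) ∨ (G.Adj t (b j) ∧ ¬ G.Adj t (b i))) := by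
      rcases hcase with ⟨hzx, hzy⟩ | ⟨hzx, hzy⟩
      · exact hcore (b i) (b j) z hzx hzy hzj hjS.2.2.1 (hcenter _ hjS)
      · obtain ⟨t, htM, hor⟩ := hcore (b j) (b i) z hzx hzy hzi hiS.2.2.1 (hcenter _ hiS)
        exact ⟨t, htM, hor.symm⟩
    obtain ⟨t, htM, hone⟩ := hstep
    have htne_i : t ≠ b i := fun h => hiS.2.1 (h ▸ htM)
    have htne_j : t ≠ b j := fun h => hjS.2.1 (h ▸ htM)
    have htb : t ∉ Set.range b := by
      rintro htb
      have h1 : G.Adj t (b i) := hclq t (b i) htb hiS.1 htne_i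
      have h2 : G.Adj t (b j) := hclq t (b j) htb hjS.1 htne_j
      rcases hone with ⟨_, hn⟩ | ⟨_, hn⟩
      · exact hn h2
      · exact hn h1
    rcases hK.cover t htb with ((hN | hL) | hR) | hC
    · rcases hone with ⟨_, hn⟩ | ⟨_, hn⟩
      · exact (hn (hK.nAdj t hN j)).elim
      · exact (hn (hK.nAdj t hN i)).elim
    · exact ⟨t, htM, Or.inl hL, hone⟩
    · exact ⟨t, htM, Or.inr hR, hone⟩
    · rcases hone with ⟨ha, _⟩ | ⟨ha, _⟩
      · exact (hK.cNotAdj t hC i ha).elim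
      · exact (hK.cNotAdj t hC j ha).elim
  -- monotone adjacency along the clique ordering
  have rup : ∀ t ∈ R, ∀ i j : Fin p, i ≤ j → G.Adj t (b i) → G.Adj t (b j) := by
    intro t htR i j hij hadj
    have := finStep_up (P := fun m => G.Adj (b m) t)
      (fun i j h hP => hK.rMono i j h t htR hP) i j hij hadj.symm
    exact this.symm
  have ldown : ∀ t ∈ L, ∀ i j : Fin p, i ≤ j → G.Adj t (b j) → G.Adj t (b i) := by
    intro t htL i j hij hadj
    have := finStep_down (P := fun m => G.Adj (b m) t)
      (fun i j h hP => hK.lMono i j h t htL hP) i j hij hadj.symm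
    exact this.symm
  -- threshold profiles
  set T' : Set V := M ∩ (L ∪ R) with hT'def
  set σ : Fin p → Set V :=
    fun i => {t | t ∈ T' ∧ ((t ∈ R ∧ G.Adj t (b i)) ∨ (t ∈ L ∧ ¬ G.Adj t (b i)))}
    with hσdef
  have hσsub : ∀ i, σ i ⊆ T' := fun i t ht => ht.1
  have hσmono : ∀ i j : Fin p, i ≤ j → σ i ⊆ σ j := by
    intro i j hij t ⟨ht1, ht2⟩
    refine ⟨ht1, ?_⟩
    rcases ht2 with ⟨htR, hadj⟩ | ⟨htL, hnadj⟩
    · exact Or.inl ⟨htR, rup t htR i j hij hadj⟩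
    · exact Or.inr ⟨htL, fun h => hnadj (ldown t htL i j hij h)⟩
  have hstrict : ∀ i j : Fin p, i < j →
      (∃ t, t ∈ M ∧ (t ∈ L ∨ t ∈ R) ∧
        ((G.Adj t (b i) ∧ ¬ G.Adj t (b j)) ∨ (G.Adj t (b j) ∧ ¬ G.Adj t (b i)))) →
      (σ i).ncard < (σ j).ncard := by
    rintro i j hij ⟨t, htM, htLR, hone⟩
    refine Set.ncard_lt_ncard ?_ (Set.toFinite _)
    rw [Set.ssubset_iff_of_subset (hσmono i j hij.le)]
    rcases htLR with htL | htR
    · have hor : G.Adj t (b i) ∧ ¬ G.Adj t (b j) := by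
        rcases hone with h | ⟨ha, hn⟩
        · exact h
        · exact (hn (ldown t htL i j hij.le ha)).elim
      refine ⟨t, ⟨⟨htM, Or.inl htL⟩, Or.inr ⟨htL, hor.2⟩⟩, ?_⟩
      rintro ⟨_, ⟨htR, _⟩ | ⟨_, hn⟩⟩
      · exact Set.disjoint_left.1 hdisLR htL htR
      · exact hn hor.1
    · have hor : G.Adj t (b j) ∧ ¬ G.Adj t (b i) := by
        rcases hone with ⟨ha, hn⟩ | h
        · exact (hn (rup t htR i j hij.le ha)).elim
        · exact h
      refine ⟨t, ⟨⟨htM, Or.inr htR⟩, Or.inl ⟨htR, hor.1⟩⟩, ?_⟩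
      rintro ⟨_, ⟨_, ha⟩ | ⟨htL, _⟩⟩
      · exact hor.2 ha
      · exact Set.disjoint_left.1 hdisLR htL htR
  have hψ : ∀ i j : Fin p, b i ∈ S → b j ∈ S → (σ i).ncard = (σ j).ncard →
      TrueTwins G (b i) (b j) := by
    intro i j hiS hjS hσeq
    by_contra hnt
    obtain ⟨t, htM, htLR, hone⟩ := hsep i j hiS hjS hnt
    rcases lt_trichotomy i j with h | h | h
    · exact absurd hσeq (Nat.ne_of_lt (hstrict i j h ⟨t, htM, htLR, hone⟩))
    · exact hnt (by subst h; rfl)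
    · exact absurd hσeq.symm (Nat.ne_of_lt (hstrict j i h ⟨t, htM, htLR, hone.symm⟩))
  -- counting S by profile classes
  have hσle : ∀ i, (σ i).ncard ≤ T'.ncard :=
    fun i => Set.ncard_le_ncard (hσsub i) (Set.toFinite _)
  set Sn : ℕ → Set V := fun n => {x | x ∈ S ∧ ∃ i : Fin p, b i = x ∧ (σ i).ncard = n}
    with hSndef
  have hScover : S ⊆ ⋃ n ∈ Finset.range (T'.ncard + 1), Sn n := by
    intro x hx
    obtain ⟨i, hi⟩ := hx.1
    refine Set.mem_biUnion (Finset.mem_range.2 (Nat.lt_succ_of_le (hσle i)))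
      ⟨hx, i, hi, rfl⟩
  have hSn : ∀ n, (Sn n).ncard ≤ k + 1 := by
    intro n
    refine htwins (Sn n) ?_
    rintro u ⟨huS, i, hbi, hσi⟩ v ⟨hvS, j, hbj, hσj⟩
    rw [← hbi, ← hbj]
    exact hψ i j (hbi ▸ huS) (hbj ▸ hvS) (by rw [hσi, hσj])
  have hS : S.ncard ≤ (T'.ncard + 1) * (k + 1) := by
    calc S.ncard ≤ (⋃ n ∈ Finset.range (T'.ncard + 1), Sn n).ncard :=
          Set.ncard_le_ncard hScover (Set.toFinite _)
      _ ≤ ∑ n ∈ Finset.range (T'.ncard + 1), (Sn n).ncard := ncard_biUnion_le _ _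
      _ ≤ ∑ _n ∈ Finset.range (T'.ncard + 1), (k + 1) := Finset.sum_le_sum (fun n _ => hSn n)
      _ = (T'.ncard + 1) * (k + 1) := by rw [Finset.sum_const, smul_eq_mul, Finset.card_range]
  -- X1 and T' are disjoint subsets of M
  set X1 : Set V := Set.range b ∩ M with hX1def
  have hX1T : X1.ncard + T'.ncard ≤ 2 * k + k * k := by
    have hdisj : Disjoint X1 T' := by
      refine Set.disjoint_left.2 ?_
      rintro x ⟨hxb, _⟩ ⟨_, hLR⟩
      rcases hLR with hL | hR
      · exact Set.disjoint_left.1 hdisbL hxb hL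
      · exact Set.disjoint_left.1 hdisbR hxb hR
    have : X1.ncard + T'.ncard = (X1 ∪ T').ncard := (Set.ncard_union_eq hdisj).symm
    rw [this]
    refine le_trans (Set.ncard_le_ncard ?_ (Set.toFinite _)) hM
    rintro x (⟨_, hxM⟩ | ⟨hxM, _⟩) <;> exact hxM
  -- decomposition of the dirty set
  have hdecomp : {x ∈ Set.range b | InClaw G x ∨ InC4 G x} ⊆ X1 ∪ (X2 ∪ S) := by
    rintro x ⟨hxb, hdirty⟩
    by_cases hxM : x ∈ M
    · exact Or.inl ⟨hxb, hxM⟩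
    by_cases hc4 : InC4 G x
    · exact Or.inr (Or.inl ⟨hxb, fun hA => hxM (Or.inl hA), hc4⟩)
    have hclaw : InClaw G x := by
      rcases hdirty with h | h
      · exact h
      · exact absurd h hc4
    exact Or.inr (Or.inr ⟨hxb, hxM, hc4, hclaw⟩)
  have htotal : {x ∈ Set.range b | InClaw G x ∨ InC4 G x}.ncard ≤
      X1.ncard + (X2.ncard + S.ncard) := by
    refine le_trans (Set.ncard_le_ncard hdecomp (Set.toFinite _)) ?_
    exact le_trans (Set.ncard_union_le _ _)
      (Nat.add_le_add_left (Set.ncard_union_le _ _) _)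
  -- final arithmetic
  have hT'M : T'.ncard ≤ 2 * k + k * k := by
    have h1 : X1.ncard + T'.ncard ≤ 2 * k + k * k := hX1T
    omega
  have harith : X1.ncard + (X2.ncard + S.ncard) ≤ k ^ 3 + 4 * k ^ 2 + 5 * k + 1 := by
    have h2 : S.ncard ≤ (T'.ncard + 1) * (k + 1) := hS
    have h3 : X2.ncard ≤ k * k := hX2
    have h4 : X1.ncard + T'.ncard ≤ 2 * k + k * k := hX1T
    have h5 : T'.ncard * k ≤ (2 * k + k * k) * k := Nat.mul_le_mul_right k hT'M
    nlinarith [h2, h3, h4, h5]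
  exact le_trans htotal harith

end Main
/-- In a sunflower-reduced positive instance whose sets of pairwise true
twins have at most `k + 1` vertices, every `K`-join has at most
`k³ + 4k² + 5k + 1` vertices belonging to a claw or to an induced 4-cycle. -/
theorem kjoin_few_dirty_vertices [Fintype V] (G : SimpleGraph V) (k : ℕ)
    (hpos : ∃ F : Finset (Sym2 V), IsKCompletion G k F)
    (hred : SunflowerReduced G k)
    (htwins : ∀ T : Set V, (∀ u ∈ T, ∀ v ∈ T, TrueTwins G u v) →
      T.ncard ≤ k + 1)
    (B : Set V) (hB : IsKJoin G B) :
    {x ∈ B | InClaw G x ∨ InC4 G x}.ncard ≤ k ^ 3 + 4 * k ^ 2 + 5 * k + 1 := by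
  obtain ⟨F, hFcomp, hFcard⟩ := hpos
  obtain ⟨p, b, N, L, R, C, hrange, hK⟩ := hB
  rw [← hrange]
  exact kjoin_main_count G k F hFcomp hFcard hred htwins b N L R C hK
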